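/- Let p be a prime, E ⊂ ℚ_p a uniformly discrete set, and f ∈ L¹(ℚ_p) nonnegative with ∫ f dm > 0, satisfying ∑_{λ∈E} f(x-λ) = 1 for a.e. x. Then E has a bounded density: the limit D(E) = lim_{k→∞} Card(E ∩ B(x₀, p^k))/m(B(x₀, p^k)) exists, is independent of x₀ ∈ ℚ_p, and equals 1/∫_{ℚ_p} f dm. -/

import Mathlib

open MeasureTheory
open scoped ENNReal

noncomputable instance (p : ℕ) [Fact p.Prime] : MeasurableSpace ℚ_[p] := borel _
instance (p : ℕ) [Fact p.Prime] : BorelSpace ℚ_[p] := ⟨rfl⟩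

/-- Haar measure on `ℚ_[p]`, normalized so that `ℤ_p` (the closed unit ball) has measure 1. -/
noncomputable def haarQp (p : ℕ) [Fact p.Prime] : Measure ℚ_[p] :=
  Measure.addHaarMeasure
    ⟨⟨Metric.closedBall 0 1, isCompact_closedBall 0 1⟩,
      ⟨0, by
        rw [mem_interior_iff_mem_nhds]
        exact Metric.closedBall_mem_nhds 0 one_pos⟩⟩

instance haarQp_isAddHaar (p : ℕ) [Fact p.Prime] : (haarQp p).IsAddHaarMeasure := by
  unfold haarQp; exact Measure.isAddHaarMeasure_addHaarMeasure _

lemma haarQp_K (p : ℕ) [Fact p.Prime] : haarQp p (Metric.closedBall (0:ℚ_[p]) 1) = 1 := by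
  unfold haarQp; exact Measure.addHaarMeasure_self


variable {p : ℕ} [Fact p.Prime]

lemma exists_digit (y : ℚ_[p]) (hy : ‖y‖ ≤ 1) (n : ℕ) :
    ∃ a : ℕ, a < p ^ n ∧ ‖y - (a : ℚ_[p])‖ ≤ (p : ℝ) ^ (-n : ℤ) := by
  set z : ℤ_[p] := ⟨y, hy⟩ with hz
  refine ⟨z.appr n, PadicInt.appr_lt z n, ?_⟩
  have h := (PadicInt.norm_le_pow_iff_mem_span_pow (z - (z.appr n : ℤ_[p])) n).mpr
    (PadicInt.appr_spec n z)
  have : ((z - (z.appr n : ℤ_[p]) : ℤ_[p]) : ℚ_[p]) = y - (z.appr n : ℚ_[p]) := by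
    push_cast [hz]
    rfl
  rwa [PadicInt.norm_def, this] at h

lemma digit_unique {a b : ℕ} {n : ℕ} (ha : a < p ^ n) (hb : b < p ^ n)
    (h : ‖((a : ℚ_[p]) - b)‖ ≤ (p : ℝ) ^ (-n : ℤ)) : a = b := by
  have : ((a : ℤ) : ℚ_[p]) - ((b : ℤ) : ℚ_[p]) = (((a - b : ℤ)) : ℚ_[p]) := by push_cast; ring
  have hdvd : ((p : ℤ) ^ n) ∣ (a - b : ℤ) := by
    rw [← Padic.norm_int_le_pow_iff_dvd]
    simpa [this] using h
  have ha' : (a : ℤ) < (p : ℤ) ^ n := by exact_mod_cast ha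
  have hb' : (b : ℤ) < (p : ℤ) ^ n := by exact_mod_cast hb
  have := Int.eq_zero_of_abs_lt_dvd hdvd (by rw [abs_sub_lt_iff]; omega)
  omega

lemma norm_pi (k : ℕ) : ‖(((p:ℚ_[p]) ^ k)⁻¹)‖ = (p : ℝ) ^ k := by
  have hp1 : (1:ℝ) < p := by exact_mod_cast (Fact.out : p.Prime).one_lt
  rw [norm_inv, Padic.norm_p_pow]
  rw [zpow_neg, zpow_natCast, inv_inv]

lemma mem_coset_iff (k : ℕ) (a : ℕ) (x : ℚ_[p]) :
    ‖x - (a : ℚ_[p]) * ((p:ℚ_[p])^k)⁻¹‖ ≤ 1 ↔ ‖x * (p:ℚ_[p])^k - a‖ ≤ (p:ℝ)^(-k:ℤ) := by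
  have hp0 : (0:ℝ) < (p:ℝ) := by exact_mod_cast (Fact.out : p.Prime).pos
  have hpk : ((p:ℚ_[p])^k) ≠ 0 := pow_ne_zero _ (by exact_mod_cast (Fact.out : p.Prime).ne_zero)
  have key : (x * (p:ℚ_[p])^k - a) = (x - (a:ℚ_[p]) * ((p:ℚ_[p])^k)⁻¹) * (p:ℚ_[p])^k := by
    field_simp
  have hpos : (0:ℝ) < ((p:ℝ)^k)⁻¹ := by positivity
  rw [key, norm_mul, Padic.norm_p_pow, zpow_neg, zpow_natCast]
  exact (mul_le_iff_le_one_left hpos).symm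

lemma qball_closed (c : ℚ_[p]) (r : ℝ) : IsClosed {x : ℚ_[p] | ‖x - c‖ ≤ r} :=
  isClosed_le (by continuity) continuous_const

lemma qball_measurable (c : ℚ_[p]) (r : ℝ) : MeasurableSet {x : ℚ_[p] | ‖x - c‖ ≤ r} :=
  (qball_closed c r).measurableSet


lemma haarQp_shift (c : ℚ_[p]) (r : ℝ) :
    haarQp p {x : ℚ_[p] | ‖x - c‖ ≤ r} = haarQp p {x : ℚ_[p] | ‖x‖ ≤ r} := by
  have hmp : MeasurePreserving (fun x : ℚ_[p] => x - c) (haarQp p) (haarQp p) :=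
    measurePreserving_sub_right (haarQp p) c
  have : {x : ℚ_[p] | ‖x - c‖ ≤ r} = (fun x : ℚ_[p] => x - c) ⁻¹' {x : ℚ_[p] | ‖x‖ ≤ r} := rfl
  rw [this, hmp.measure_preimage (by
    simpa using (qball_measurable (0:ℚ_[p]) r).nullMeasurableSet)]

lemma haarQp_unit (p : ℕ) [Fact p.Prime] : haarQp p {x : ℚ_[p] | ‖x‖ ≤ 1} = 1 := by
  have : {x : ℚ_[p] | ‖x‖ ≤ 1} = Metric.closedBall (0:ℚ_[p]) 1 := by
    ext x; simp [Metric.mem_closedBall, dist_eq_norm]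
  rw [this, haarQp_K]

lemma haarQp_ball (c : ℚ_[p]) (k : ℕ) :
    haarQp p {x : ℚ_[p] | ‖x - c‖ ≤ (p:ℝ)^k} = (p : ℝ≥0∞) ^ k := by
  rw [haarQp_shift]
  have hp1 : (1:ℝ) < p := by exact_mod_cast (Fact.out : p.Prime).one_lt
  set π : ℚ_[p] := ((p:ℚ_[p])^k)⁻¹ with hπ
  have hcover : {x : ℚ_[p] | ‖x‖ ≤ (p:ℝ)^k}
      = ⋃ a ∈ Finset.range (p^k), {x : ℚ_[p] | ‖x - (a:ℚ_[p]) * π‖ ≤ 1} := by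
    ext x
    simp only [Set.mem_setOf_eq, Set.mem_iUnion, Finset.mem_range, exists_prop]
    constructor
    · intro hx
      have hy : ‖x * (p:ℚ_[p])^k‖ ≤ 1 := by
        rw [norm_mul, Padic.norm_p_pow, zpow_neg, zpow_natCast]
        calc ‖x‖ * ((p:ℝ)^k)⁻¹ ≤ (p:ℝ)^k * ((p:ℝ)^k)⁻¹ :=
              mul_le_mul_of_nonneg_right hx (by positivity)
          _ = 1 := mul_inv_cancel₀ (by positivity)
      obtain ⟨a, ha, hna⟩ := exists_digit (x * (p:ℚ_[p])^k) hy k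
      exact ⟨a, ha, (mem_coset_iff k a x).mpr hna⟩
    · rintro ⟨a, ha, hxa⟩
      have h1 : ‖(a:ℚ_[p]) * π‖ ≤ (p:ℝ)^k := by
        rw [norm_mul, hπ, norm_pi]
        calc ‖((a:ℕ):ℚ_[p])‖ * (p:ℝ)^k ≤ 1 * (p:ℝ)^k := by
              have : ‖(((a:ℤ)):ℚ_[p])‖ ≤ 1 := Padic.norm_int_le_one _
              refine mul_le_mul_of_nonneg_right ?_ (by positivity)
              simpa using this
          _ = (p:ℝ)^k := one_mul _
      calc ‖x‖ = ‖(x - (a:ℚ_[p]) * π) + (a:ℚ_[p]) * π‖ := by ring_nf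
        _ ≤ max ‖x - (a:ℚ_[p]) * π‖ ‖(a:ℚ_[p]) * π‖ := Padic.nonarchimedean _ _
        _ ≤ (p:ℝ)^k := max_le (le_trans hxa (one_le_pow₀ hp1.le)) h1
  rw [hcover]
  rw [measure_biUnion_finset ?hd (fun a _ => qball_measurable _ 1)]
  · have : ∀ a ∈ Finset.range (p^k),
        haarQp p {x : ℚ_[p] | ‖x - (a:ℚ_[p]) * π‖ ≤ 1} = 1 := by
      intro a _
      rw [haarQp_shift, haarQp_unit]
    rw [Finset.sum_congr rfl this]
    simp [Finset.sum_const]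
  case hd =>
    intro a ha b hb hab
    simp only [Finset.coe_range, Set.mem_Iio] at ha hb
    refine Set.disjoint_left.mpr fun x hxa hxb => hab ?_
    simp only [Set.mem_setOf_eq] at hxa hxb
    have hd : ‖(a:ℚ_[p]) * π - (b:ℚ_[p]) * π‖ ≤ 1 := by
      calc ‖(a:ℚ_[p]) * π - (b:ℚ_[p]) * π‖
          = ‖(x - (b:ℚ_[p]) * π) - (x - (a:ℚ_[p]) * π)‖ := by ring_nf
        _ ≤ max ‖x - (b:ℚ_[p]) * π‖ ‖x - (a:ℚ_[p]) * π‖ := by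
            rw [sub_eq_add_neg]
            exact le_trans (Padic.nonarchimedean _ _) (le_of_eq (by rw [norm_neg]))
        _ ≤ 1 := max_le hxb hxa
    have hd2 : ‖((a:ℚ_[p]) - b)‖ ≤ (p:ℝ)^(-k:ℤ) := by
      have hfac : (a:ℚ_[p]) * π - (b:ℚ_[p]) * π = ((a:ℚ_[p]) - b) * π := by ring
      rw [hfac, norm_mul, hπ, norm_pi] at hd
      have hpos : (0:ℝ) < (p:ℝ)^k := by positivity
      rw [zpow_neg, zpow_natCast]
      calc ‖(a:ℚ_[p]) - b‖ = ‖(a:ℚ_[p]) - b‖ * (p:ℝ)^k * ((p:ℝ)^k)⁻¹ := by field_simp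
        _ ≤ 1 * ((p:ℝ)^k)⁻¹ := mul_le_mul_of_nonneg_right hd (by positivity)
        _ = ((p:ℝ)^k)⁻¹ := one_mul _
    exact digit_unique ha hb hd2

lemma norm_mul_ppow (x : ℚ_[p]) (k : ℕ) :
    ‖x * (p:ℚ_[p])^k‖ = ‖x‖ * ((p:ℝ)^k)⁻¹ := by
  rw [norm_mul, Padic.norm_p_pow, zpow_neg, zpow_natCast]

lemma sep_count (E : Set ℚ_[p]) {ε : ℝ} (hε : 0 < ε)
    (hsep : ∀ x ∈ E, ∀ y ∈ E, x ≠ y → ε ≤ ‖x - y‖) {j : ℕ}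
    (hj : ((p:ℝ)^j)⁻¹ < ε) (c : ℚ_[p]) (k : ℕ) :
    (E ∩ {x : ℚ_[p] | ‖x - c‖ ≤ (p:ℝ)^k}).Finite ∧
      Nat.card ↥(E ∩ {x : ℚ_[p] | ‖x - c‖ ≤ (p:ℝ)^k}) ≤ p ^ (k + j) := by
  have hp1 : (1:ℝ) < p := by exact_mod_cast (Fact.out : p.Prime).one_lt
  set S := E ∩ {x : ℚ_[p] | ‖x - c‖ ≤ (p:ℝ)^k} with hS
  have hmem : ∀ x ∈ S, ‖(x - c) * (p:ℚ_[p])^k‖ ≤ 1 := by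
    intro x hx
    rw [norm_mul_ppow]
    calc ‖x - c‖ * ((p:ℝ)^k)⁻¹ ≤ (p:ℝ)^k * ((p:ℝ)^k)⁻¹ :=
          mul_le_mul_of_nonneg_right hx.2 (by positivity)
      _ = 1 := mul_inv_cancel₀ (by positivity)
  classical
  set g : ℚ_[p] → ℕ := fun x =>
    if h : ‖(x - c) * (p:ℚ_[p])^k‖ ≤ 1 then PadicInt.appr (⟨(x - c) * (p:ℚ_[p])^k, h⟩ : ℤ_[p]) (k + j) else 0 with hg
  have hinj : Set.InjOn g S := by
    intro x hx y hy hxy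
    by_contra hne
    have hx1 := hmem x hx
    have hy1 := hmem y hy
    rw [hg] at hxy
    simp only [dif_pos hx1, dif_pos hy1] at hxy
    set w : ℤ_[p] := (⟨(x - c) * (p:ℚ_[p])^k, hx1⟩ : ℤ_[p]) with hw
    set w' : ℤ_[p] := (⟨(y - c) * (p:ℚ_[p])^k, hy1⟩ : ℤ_[p]) with hw'
    have hspan : w - w' ∈ (Ideal.span {(p : ℤ_[p]) ^ (k+j)} : Ideal ℤ_[p]) := by
      have h1 := PadicInt.appr_spec (k+j) w
      have h2 := PadicInt.appr_spec (k+j) w'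
      have : w - w' = (w - w.appr (k+j)) - (w' - w'.appr (k+j)) := by
        rw [hxy]; ring
      rw [this]
      exact Ideal.sub_mem _ h1 h2
    have hnorm := (PadicInt.norm_le_pow_iff_mem_span_pow (w - w') (k+j)).mpr hspan
    have hcoe : ((w - w' : ℤ_[p]) : ℚ_[p]) = (x - y) * (p:ℚ_[p])^k := by
      rw [PadicInt.coe_sub]
      show (x - c) * (p:ℚ_[p])^k - (y - c) * (p:ℚ_[p])^k = _; ring
    rw [PadicInt.norm_def, hcoe, norm_mul_ppow] at hnorm
    have hxyn : ‖x - y‖ ≤ ((p:ℝ)^j)⁻¹ := by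
      have hpk : (0:ℝ) < (p:ℝ)^k := by positivity
      have := mul_le_mul_of_nonneg_right hnorm hpk.le
      rw [mul_assoc, inv_mul_cancel₀ hpk.ne', mul_one] at this
      calc ‖x - y‖ ≤ (p:ℝ) ^ (-(k+j:ℕ) : ℤ) * (p:ℝ)^k := this
        _ = ((p:ℝ)^j)⁻¹ := by
          rw [zpow_neg, zpow_natCast, pow_add]
          field_simp
    exact absurd (hsep x hx.1 y hy.1 hne) (by push_neg; exact lt_of_le_of_lt hxyn hj)
  have himg : g '' S ⊆ ↑(Finset.range (p ^ (k+j))) := by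
    rintro _ ⟨x, hx, rfl⟩
    simp only [Finset.coe_range, Set.mem_Iio, hg, dif_pos (hmem x hx)]
    exact PadicInt.appr_lt _ _
  have himgfin : (g '' S).Finite := Set.Finite.subset (Finset.range _).finite_toSet himg
  have hSfin : S.Finite := Set.Finite.of_finite_image himgfin hinj
  refine ⟨hSfin, ?_⟩
  have h1 : Nat.card S = Nat.card (g '' S) := (Nat.card_image_of_injOn hinj).symm
  rw [h1]
  calc Nat.card (g '' S) ≤ Nat.card ↑(Finset.range (p ^ (k+j)) : Set ℕ) := by
        apply Nat.card_mono (Finset.range _).finite_toSet.to_subtype himg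
    _ = p ^ (k + j) := by simp [Nat.card_coe_set_eq, Set.ncard_coe_finset]

set_option maxHeartbeats 2000000 in
open Filter Topology in
theorem stmt17 (p : ℕ) [Fact p.Prime] (E : Set ℚ_[p])
    (hE : ∃ ε > (0:ℝ), ∀ x ∈ E, ∀ y ∈ E, x ≠ y → ε ≤ ‖x - y‖)
    (f : ℚ_[p] → ℝ) (hf : Integrable f (haarQp p)) (hpos : ∀ x, 0 ≤ f x)
    (hint : 0 < ∫ x, f x ∂(haarQp p))
    (htile : ∀ᵐ x ∂(haarQp p), ∑' l : E, f (x - l) = 1) :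
    ∀ x₀ : ℚ_[p], Filter.Tendsto
      (fun k : ℕ => (Nat.card ↥(E ∩ {x : ℚ_[p] | ‖x - x₀‖ ≤ (p : ℝ) ^ k}) : ℝ)
        / (haarQp p {x : ℚ_[p] | ‖x - x₀‖ ≤ (p : ℝ) ^ k}).toReal)
      Filter.atTop (nhds (1 / ∫ x, f x ∂(haarQp p))) := by
  intro x₀
  classical
  obtain ⟨ε, hε, hsep⟩ := hE
  have hp1 : (1:ℝ) < p := by exact_mod_cast (Fact.out : p.Prime).one_lt
  obtain ⟨j, hj⟩ : ∃ j : ℕ, ((p:ℝ)^j)⁻¹ < ε := by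
    obtain ⟨j, hj⟩ := exists_pow_lt_of_lt_one hε
      (by rw [inv_lt_one_iff₀]; right; exact hp1)
    exact ⟨j, by rwa [inv_pow] at hj⟩
  set ν := haarQp p with hν
  have hfinEB : ∀ (c : ℚ_[p]) (k : ℕ),
      (E ∩ {x : ℚ_[p] | ‖x - c‖ ≤ (p:ℝ)^k}).Finite ∧
      Nat.card ↥(E ∩ {x : ℚ_[p] | ‖x - c‖ ≤ (p:ℝ)^k}) ≤ p ^ (k + j) :=
    fun c k => sep_count E hε hsep hj c k
  have hcov : ∀ x : ℚ_[p], ∃ k : ℕ, ‖x‖ ≤ (p:ℝ)^k := by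
    intro x
    obtain ⟨n, hn⟩ := exists_nat_ge ‖x‖
    refine ⟨n, le_trans hn ?_⟩
    have : (n:ℕ) ≤ p^n := le_of_lt (Nat.lt_pow_self (n := n) (by exact_mod_cast hp1))
    exact_mod_cast this
  have hEcount : E.Countable := by
    have hsubU : E ⊆ ⋃ k : ℕ, (E ∩ {x : ℚ_[p] | ‖x - 0‖ ≤ (p:ℝ)^k}) := by
      intro x hx
      obtain ⟨k, hk⟩ := hcov x
      exact Set.mem_iUnion.mpr ⟨k, hx, by simpa using hk⟩
    exact Set.Countable.mono hsubU
      (Set.countable_iUnion fun k => ((hfinEB 0 k).1.countable))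
  haveI : Countable ↥E := hEcount.to_subtype
  set F : ℚ_[p] → ℝ≥0∞ := fun x => ENNReal.ofReal (f x) with hF
  have hFaem : AEMeasurable F ν := ENNReal.measurable_ofReal.comp_aemeasurable hf.aemeasurable
  set ρ := ν.withDensity F with hρ
  set I := ∫ x, f x ∂ν with hI
  have hIe : ∫⁻ x, F x ∂ν = ENNReal.ofReal I :=
    (ofReal_integral_eq_lintegral_ofReal hf (Filter.Eventually.of_forall hpos)).symm
  have hρuniv : ρ Set.univ = ENNReal.ofReal I := by
    rw [hρ, withDensity_apply _ MeasurableSet.univ, setLIntegral_univ, hIe]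
  haveI : IsFiniteMeasure ρ := isFiniteMeasure_withDensity (by rw [hIe]; exact ENNReal.ofReal_ne_top)
  set Bset : ℕ → Set ℚ_[p] := fun k => {x | ‖x - x₀‖ ≤ (p:ℝ)^k} with hBset
  set ball0 : ℕ → Set ℚ_[p] := fun k => {x : ℚ_[p] | ‖x‖ ≤ (p:ℝ)^k} with hball0
  have hball0meas : ∀ k, MeasurableSet (ball0 k) :=
    fun k => (isClosed_le continuous_norm continuous_const).measurableSet
  have hBmeas : ∀ k, MeasurableSet (Bset k) := fun k => qball_measurable x₀ _
  have hSmeas : ∀ (l : ℚ_[p]) (k : ℕ), MeasurableSet ((· + l) ⁻¹' Bset k) :=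
    fun l k => (hBmeas k).preimage (measurable_add_const l)
  have hterm : ∀ (l : ℚ_[p]) (k : ℕ),
      ∫⁻ x in Bset k, F (x - l) ∂ν = ρ ((· + l) ⁻¹' Bset k) := by
    intro l k
    rw [← lintegral_indicator (hBmeas k)]
    have hmapeq : Measure.map (⇑(MeasurableEquiv.addRight l)) ν = ν := by
      rw [MeasurableEquiv.coe_addRight]; exact map_add_right_eq_self ν l
    have h1 : ∫⁻ x, (Bset k).indicator (fun x => F (x - l)) x ∂ν
        = ∫⁻ y, (Bset k).indicator (fun x => F (x - l)) (y + l) ∂ν := by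
      conv_lhs => rw [← hmapeq]
      exact lintegral_map_equiv _ (MeasurableEquiv.addRight l)
    rw [h1]
    have h2 : ∀ y, (Bset k).indicator (fun x => F (x - l)) (y + l)
        = ((· + l) ⁻¹' Bset k).indicator F y := by
      intro y
      by_cases h : y + l ∈ Bset k <;>
        simp [Set.indicator, h, Set.mem_preimage, add_sub_cancel_right]
    rw [lintegral_congr h2, lintegral_indicator (hSmeas l k), hρ,
      withDensity_apply _ (hSmeas l k)]
  have htileE : ∀ᵐ x ∂ν, ∑' l : E, F (x - ↑l) = 1 := by
    filter_upwards [htile] with x hx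
    have hsum : Summable (fun l : E => f (x - ↑l)) := by
      by_contra h
      rw [tsum_eq_zero_of_not_summable h] at hx
      norm_num at hx
    have h2 := ENNReal.ofReal_tsum_of_nonneg (fun l : E => hpos (x - ↑l)) hsum
    rw [hx] at h2
    simpa [hF] using h2.symm
  have hkey : ∀ k, ν (Bset k) = ∑' l : E, ρ ((· + (l:ℚ_[p])) ⁻¹' Bset k) := by
    intro k
    have haem : ∀ l : E, AEMeasurable (fun x => F (x - (l:ℚ_[p]))) (ν.restrict (Bset k)) := by
      intro l
      exact (hFaem.comp_quasiMeasurePreserving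
        (measurePreserving_sub_right ν (l:ℚ_[p])).quasiMeasurePreserving).restrict
    have h1 : ν (Bset k) = ∫⁻ x in Bset k, (∑' l : E, F (x - ↑l)) ∂ν := by
      rw [← setLIntegral_one]
      exact (lintegral_congr_ae (ae_restrict_of_ae htileE)).symm
    rw [h1, lintegral_tsum haem]
    exact tsum_congr fun l => hterm (l:ℚ_[p]) k
  have hmax : ∀ (a b : ℚ_[p]) (r : ℝ), ‖a‖ ≤ r → ‖b‖ ≤ r → ‖a + b‖ ≤ r :=
    fun a b r ha hb => le_trans (Padic.nonarchimedean a b) (max_le ha hb)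
  have hJset : ∀ (k : ℕ) (l : ℚ_[p]), l ∈ Bset k → (· + l) ⁻¹' Bset k = ball0 k := by
    intro k l hl
    ext y
    simp only [Set.mem_preimage, hBset, hball0, Set.mem_setOf_eq] at *
    constructor
    · intro h
      have hy : y = (y + l - x₀) + (x₀ - l) := by ring
      rw [hy]
      exact hmax _ _ _ h (by rwa [norm_sub_rev] at hl)
    · intro h
      have hy : y + l - x₀ = y + (l - x₀) := by ring
      rw [hy]
      exact hmax _ _ _ h hl
  have hsub : ∀ (k : ℕ) (l : ℚ_[p]), l ∉ Bset k →
      (· + l) ⁻¹' Bset k ⊆ (ball0 k)ᶜ := by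
    intro k l hl y hy
    simp only [Set.mem_preimage, hBset, Set.mem_setOf_eq] at hy hl
    intro hyball
    simp only [hball0, Set.mem_setOf_eq] at hyball
    apply hl
    have hy2 : l - x₀ = (y + l - x₀) + (-y) := by ring
    rw [hy2]
    exact hmax _ _ _ hy (by rwa [norm_neg])
  have hcount : ∀ (k : ℕ) (y : ℚ_[p]),
      ∑' l : E, ((· + (l:ℚ_[p])) ⁻¹' Bset k).indicator (fun _ => (1:ℝ≥0∞)) y
        ≤ ((p ^ (k + j) : ℕ) : ℝ≥0∞) := by
    intro k y
    rw [ENNReal.tsum_eq_iSup_sum]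
    refine iSup_le fun s => ?_
    have heq : ∑ l ∈ s, ((· + (l:ℚ_[p])) ⁻¹' Bset k).indicator (fun _ => (1:ℝ≥0∞)) y
        = ((s.filter (fun l : E => y + (l:ℚ_[p]) ∈ Bset k)).card : ℝ≥0∞) := by
      rw [Finset.card_filter]
      push_cast
      refine Finset.sum_congr rfl fun l _ => ?_
      by_cases h : y + (l:ℚ_[p]) ∈ Bset k <;> simp [Set.indicator, Set.mem_preimage, h]
    rw [heq]
    have hcard : (s.filter (fun l : E => y + (l:ℚ_[p]) ∈ Bset k)).card ≤ p ^ (k + j) := by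
      have hfin2 := (hfinEB (x₀ - y) k).1
      refine le_trans (Finset.card_le_card_of_injOn (fun l : E => (l:ℚ_[p]))
        ?_ (Subtype.coe_injective.injOn.mono (Set.subset_univ _)) (t := hfin2.toFinset)) ?_
      · intro l hl
        rw [Finset.mem_coe, Finset.mem_filter] at hl
        rw [Finset.mem_coe, Set.Finite.mem_toFinset]
        refine ⟨l.2, ?_⟩
        have hring : (l:ℚ_[p]) - (x₀ - y) = y + (l:ℚ_[p]) - x₀ := by ring
        simp only [Set.mem_setOf_eq, hring]
        have := hl.2
        simpa [hBset] using this
      · have h2 := (hfinEB (x₀ - y) k).2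
        rwa [Nat.card_coe_set_eq, Set.ncard_eq_toFinset_card _ hfin2] at h2
    exact_mod_cast hcard
  -- decomposition of the key identity
  have hmain : ∀ k : ℕ, ∃ R : ℝ≥0∞,
      ν (Bset k) = (Nat.card ↥(E ∩ Bset k) : ℝ≥0∞) * ρ (ball0 k) + R ∧
      R ≤ ((p ^ (k + j) : ℕ) : ℝ≥0∞) * ρ ((ball0 k)ᶜ) := by
    intro k
    set u : ↥E → ℝ≥0∞ := fun l => if (l:ℚ_[p]) ∈ Bset k then ρ (ball0 k) else 0 with hu
    set v : ↥E → ℝ≥0∞ := fun l =>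
      if (l:ℚ_[p]) ∈ Bset k then 0 else ρ ((· + (l:ℚ_[p])) ⁻¹' Bset k) with hv
    refine ⟨∑' l, v l, ?_, ?_⟩
    · rw [hkey k]
      have hsplit : ∀ l : ↥E, ρ ((· + (l:ℚ_[p])) ⁻¹' Bset k) = u l + v l := by
        intro l
        by_cases h : (l:ℚ_[p]) ∈ Bset k
        · rw [hJset k _ h]; simp [hu, hv, h]
        · simp [hu, hv, h]
      rw [tsum_congr hsplit, ENNReal.tsum_add]
      congr 1
      have hTfin : {l : ↥E | (l:ℚ_[p]) ∈ Bset k}.Finite := by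
        have hpre : {l : ↥E | (l:ℚ_[p]) ∈ Bset k} = Subtype.val ⁻¹' (E ∩ Bset k) := by
          ext l; simp [l.2]
        rw [hpre]
        exact Set.Finite.preimage Subtype.coe_injective.injOn (hfinEB x₀ k).1
      set T : Finset ↥E := hTfin.toFinset with hT
      have hzero : ∀ l ∉ T, u l = 0 := by
        intro l hl
        have : (l:ℚ_[p]) ∉ Bset k := by
          simpa [hT, Set.Finite.mem_toFinset] using hl
        simp [hu, this]
      rw [tsum_eq_sum hzero]
      have hconst : ∀ l ∈ T, u l = ρ (ball0 k) := by
        intro l hl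
        have : (l:ℚ_[p]) ∈ Bset k := by
          simpa [hT, Set.Finite.mem_toFinset] using hl
        simp [hu, this]
      rw [Finset.sum_congr rfl hconst, Finset.sum_const, nsmul_eq_mul]
      congr 1
      have hcardeq : Nat.card ↥(E ∩ Bset k) = T.card := by
        have h1 : E ∩ Bset k = {x ∈ E | x ∈ Bset k} := (Set.sep_mem_eq).symm
        have h2 : Nat.card ↥{l : ↥E | (l:ℚ_[p]) ∈ Bset k} = T.card := by
          rw [Nat.card_coe_set_eq, Set.ncard_eq_toFinset_card _ hTfin]
        rw [h1, Nat.card_congr (Equiv.Set.sep E (· ∈ Bset k))]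
        exact h2
      rw [hcardeq]
    · set ρ' := ρ.restrict ((ball0 k)ᶜ) with hρ'
      have hvle : ∀ l : ↥E, v l ≤ ρ' ((· + (l:ℚ_[p])) ⁻¹' Bset k) := by
        intro l
        by_cases h : (l:ℚ_[p]) ∈ Bset k
        · simp [hv, h]
        · rw [hv]
          simp only [if_neg h]
          rw [hρ', Measure.restrict_apply (hSmeas _ k),
            Set.inter_eq_self_of_subset_left (hsub k _ h)]
      calc (∑' l, v l) ≤ ∑' l : ↥E, ρ' ((· + (l:ℚ_[p])) ⁻¹' Bset k) :=
            ENNReal.tsum_le_tsum hvle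
        _ = ∑' l : ↥E, ∫⁻ y, ((· + (l:ℚ_[p])) ⁻¹' Bset k).indicator (fun _ => 1) y ∂ρ' := by
            refine tsum_congr fun l => ?_
            rw [lintegral_indicator (hSmeas _ k), setLIntegral_one]
        _ = ∫⁻ y, ∑' l : ↥E, ((· + (l:ℚ_[p])) ⁻¹' Bset k).indicator (fun _ => 1) y ∂ρ' :=
            (lintegral_tsum fun l => (measurable_const.indicator (hSmeas _ k)).aemeasurable).symm
        _ ≤ ∫⁻ _, ((p ^ (k + j) : ℕ) : ℝ≥0∞) ∂ρ' := lintegral_mono (hcount k)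
        _ = ((p ^ (k + j) : ℕ) : ℝ≥0∞) * ρ ((ball0 k)ᶜ) := by
            rw [lintegral_const, hρ', Measure.restrict_apply_univ]
  -- limits
  have hUuniv : ⋃ k, ball0 k = Set.univ := by
    ext x
    simp only [Set.mem_iUnion, Set.mem_univ, iff_true, hball0, Set.mem_setOf_eq]
    exact hcov x
  have hmono : Monotone ball0 := by
    intro a b hab x hx
    simp only [hball0, Set.mem_setOf_eq] at *
    exact le_trans hx (pow_le_pow_right₀ hp1.le hab)
  have hρlim : Tendsto (fun k => ρ (ball0 k)) atTop (𝓝 (ρ Set.univ)) := by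
    have h1 := tendsto_measure_iUnion_atTop (μ := ρ) hmono
    rwa [hUuniv] at h1
  have hρuniv_ne : ρ Set.univ ≠ ⊤ := measure_ne_top ρ _
  have h2univ : (ρ Set.univ).toReal = I := by rw [hρuniv, ENNReal.toReal_ofReal hint.le]
  have hjk : Tendsto (fun k => (ρ (ball0 k)).toReal) atTop (𝓝 I) := by
    have h1 := (ENNReal.tendsto_toReal hρuniv_ne).comp hρlim
    rwa [h2univ] at h1
  have htk : Tendsto (fun k => (ρ ((ball0 k)ᶜ)).toReal) atTop (𝓝 0) := by
    have hcompl : ∀ k, (ρ ((ball0 k)ᶜ)).toReal = (ρ Set.univ).toReal - (ρ (ball0 k)).toReal := by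
      intro k
      rw [measure_compl (hball0meas k) (measure_ne_top ρ _),
        ENNReal.toReal_sub_of_le (measure_mono (Set.subset_univ _)) hρuniv_ne]
    simp_rw [hcompl, h2univ]
    simpa using (tendsto_const_nhds (x := I)).sub hjk
  choose R hReq hRle using hmain
  have hRfin : ∀ k, R k ≠ ⊤ := fun k =>
    ne_top_of_le_ne_top (ENNReal.mul_ne_top (ENNReal.natCast_ne_top _) (measure_ne_top ρ _))
      (hRle k)
  have hreal : ∀ k, (p:ℝ)^k
      = (Nat.card ↥(E ∩ Bset k) : ℝ) * (ρ (ball0 k)).toReal + (R k).toReal := by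
    intro k
    have hb : ν (Bset k) = (p:ℝ≥0∞)^k := haarQp_ball x₀ k
    have h1 := hReq k
    rw [hb] at h1
    have h2 := congrArg ENNReal.toReal h1
    rwa [ENNReal.toReal_add
        (ENNReal.mul_ne_top (ENNReal.natCast_ne_top _) (measure_ne_top ρ _)) (hRfin k),
      ENNReal.toReal_mul, ENNReal.toReal_pow, ENNReal.toReal_natCast,
      ENNReal.toReal_natCast] at h2
  have hrb : ∀ k, (R k).toReal ≤ (p:ℝ)^(k+j) * (ρ ((ball0 k)ᶜ)).toReal := by
    intro k
    have h1 := ENNReal.toReal_mono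
      (ENNReal.mul_ne_top (ENNReal.natCast_ne_top _) (measure_ne_top ρ _)) (hRle k)
    rwa [ENNReal.toReal_mul, ENNReal.toReal_natCast, Nat.cast_pow] at h1
  have hb0 : Tendsto (fun k => (R k).toReal / (p:ℝ)^k) atTop (𝓝 0) := by
    refine squeeze_zero (g := fun k => (p:ℝ)^j * (ρ ((ball0 k)ᶜ)).toReal)
      (fun k => div_nonneg ENNReal.toReal_nonneg (by positivity)) (fun k => ?_) ?_
    · rw [div_le_iff₀ (by positivity)]
      calc (R k).toReal ≤ (p:ℝ)^(k+j) * (ρ ((ball0 k)ᶜ)).toReal := hrb k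
        _ = (p:ℝ)^j * (ρ ((ball0 k)ᶜ)).toReal * (p:ℝ)^k := by rw [pow_add]; ring
    · simpa using (tendsto_const_nhds (x := (p:ℝ)^j)).mul htk
  have hfinal : Tendsto (fun k => (1 - (R k).toReal/(p:ℝ)^k) / (ρ (ball0 k)).toReal)
      atTop (𝓝 (1 / I)) := by
    have h1 : Tendsto (fun k => 1 - (R k).toReal/(p:ℝ)^k) atTop (𝓝 1) := by
      simpa using (tendsto_const_nhds (x := (1:ℝ))).sub hb0
    exact h1.div hjk hint.ne'
  have hEq : ∀ᶠ k in atTop, (1 - (R k).toReal/(p:ℝ)^k) / (ρ (ball0 k)).toReal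
      = (Nat.card ↥(E ∩ Bset k) : ℝ) / (ν (Bset k)).toReal := by
    filter_upwards [hjk.eventually (eventually_gt_nhds hint)] with k hk
    have hpk : (0:ℝ) < (p:ℝ)^k := by positivity
    have hden : (ν (Bset k)).toReal = (p:ℝ)^k := by
      rw [haarQp_ball x₀ k]
      simp [ENNReal.toReal_pow]
    rw [hden, div_eq_div_iff hk.ne' hpk.ne']
    have h2 : (1 - (R k).toReal/(p:ℝ)^k) * (p:ℝ)^k = (p:ℝ)^k - (R k).toReal := by
      field_simp
    rw [h2]
    have h3 := hreal k
    linarith [h3]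
  exact hfinal.congr' hEq
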